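/- Let n ≥ 2, let G be a spray on ℝⁿ, let c : I → ℝⁿ be a geodesic of G, and let V : I × (−ε,ε)^{n−1} → ℝⁿ be an (n−1)-parameter geodesic variation of c. Let e₁,…,e_{n−1} be parallel vector fields along c such that {c'(t), e₁(t),…,e_{n−1}(t)} is a basis of ℝⁿ for every t ∈ I, and let J : I → End(ℝⁿ) be the (unique) field of endomorphisms determined by J(t)·c'(t) = 0 and J(t)·e_a(t) = ∂_{s^a}V(t,0,…,0) for a = 1,…,n−1 and t ∈ I. Then J is C^∞ and is a Jacobi tensor along c: ∇²J + Φ∘J = 0. -/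

import Mathlib

noncomputable section

/-- Euclidean coordinate space `ℝⁿ`. -/
abbrev En (n : ℕ) : Type := Fin n → ℝ

/-- A semispray on `ℝⁿ` in coordinates: a map `G : ℝⁿ × (ℝⁿ ∖ {0}) → ℝⁿ` that is
`C^∞` on the set where the second (velocity) variable is nonzero. -/
def IsSemispray (n : ℕ) (G : En n × En n → En n) : Prop :=
  ContDiffOn ℝ (⊤ : ℕ∞) G {p : En n × En n | p.2 ≠ 0}

/-- A spray: a semispray that is positively `2`-homogeneous in the velocity variable. -/
def IsSpray (n : ℕ) (G : En n × En n → En n) : Prop :=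
  IsSemispray n G ∧
    ∀ (x y : En n), y ≠ 0 → ∀ l : ℝ, 0 < l → G (x, l • y) = l ^ 2 • G (x, y)

/-- `c` is a geodesic of the semispray `G` on the set `I`:
`c` is `C^∞` on `I`, regular, and `c'' + 2 G(c, c') = 0` on `I`. -/
def IsGeodesicOn (n : ℕ) (G : En n × En n → En n) (c : ℝ → En n) (I : Set ℝ) : Prop :=
  ContDiffOn ℝ (⊤ : ℕ∞) c I ∧ (∀ t ∈ I, deriv c t ≠ 0) ∧
    ∀ t ∈ I, deriv (deriv c) t + (2 : ℝ) • G (c t, deriv c t) = 0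

/-- Partial Fréchet derivative of `G` in its first (base) variable. -/
def DxG (n : ℕ) (G : En n × En n → En n) (x y : En n) : En n →L[ℝ] En n :=
  fderiv ℝ (fun x' => G (x', y)) x

/-- Partial Fréchet derivative of `G` in its second (velocity) variable. -/
def DyG (n : ℕ) (G : En n × En n → En n) (x y : En n) : En n →L[ℝ] En n :=
  fderiv ℝ (fun y' => G (x, y')) y

/-- `N(t) = D_yG(c(t), c'(t))` along a curve `c`. -/
def Nc (n : ℕ) (G : En n × En n → En n) (c : ℝ → En n) (t : ℝ) : En n →L[ℝ] En n :=
  DyG n G (c t) (deriv c t)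

/-- Dynamical covariant derivative `∇v = v' + N·v` of a vector field `v` along `c`. -/
def covV (n : ℕ) (G : En n × En n → En n) (c : ℝ → En n) (v : ℝ → En n) (t : ℝ) : En n :=
  deriv v t + Nc n G c t (v t)

/-- Dynamical covariant derivative `∇J = J' + N∘J − J∘N` of an endomorphism field `J`
along `c`. -/
def covE (n : ℕ) (G : En n × En n → En n) (c : ℝ → En n)
    (J : ℝ → En n →L[ℝ] En n) (t : ℝ) : En n →L[ℝ] En n :=
  deriv J t + (Nc n G c t).comp (J t) - (J t).comp (Nc n G c t)

/-- Jacobi endomorphism `Φ = 2 D_xG(c,c') − N' − N∘N` along `c`. -/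
def Phi (n : ℕ) (G : En n × En n → En n) (c : ℝ → En n) (t : ℝ) : En n →L[ℝ] En n :=
  (2 : ℝ) • DxG n G (c t) (deriv c t) - deriv (fun t' => Nc n G c t') t
    - (Nc n G c t).comp (Nc n G c t)

/-- A parallel vector field along `c` on `I`: `∇v = v' + N·v = 0`. -/
def IsParallel (n : ℕ) (G : En n × En n → En n) (c : ℝ → En n) (I : Set ℝ)
    (v : ℝ → En n) : Prop :=
  ContDiffOn ℝ (⊤ : ℕ∞) v I ∧ ∀ t ∈ I, deriv v t + Nc n G c t (v t) = 0

/-- A Jacobi field along a geodesic `c` on `I`: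
`j'' + 2 D_yG(c,c')·j' + 2 D_xG(c,c')·j = 0`. -/
def IsJacobiField (n : ℕ) (G : En n × En n → En n) (c : ℝ → En n) (I : Set ℝ)
    (j : ℝ → En n) : Prop :=
  ContDiffOn ℝ (⊤ : ℕ∞) j I ∧ ∀ t ∈ I,
    deriv (deriv j) t + (2 : ℝ) • DyG n G (c t) (deriv c t) (deriv j t)
      + (2 : ℝ) • DxG n G (c t) (deriv c t) (j t) = 0

/-- A Jacobi tensor along `c` on `I`: a `C^∞` endomorphism field with `∇²J + Φ∘J = 0`. -/
def IsJacobiTensor (n : ℕ) (G : En n × En n → En n) (c : ℝ → En n) (I : Set ℝ)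
    (J : ℝ → En n →L[ℝ] En n) : Prop :=
  ContDiffOn ℝ (⊤ : ℕ∞) J I ∧ ∀ t ∈ I,
    covE n G c (fun t' => covE n G c J t') t + (Phi n G c t).comp (J t) = 0

/-- The open cube `(−ε, ε)^k`. -/
def cube (k : ℕ) (ε : ℝ) : Set (Fin k → ℝ) := {s | ∀ i, |s i| < ε}

/-- A `k`-parameter geodesic variation of the geodesic `c` on `I`:
a `C^∞` map `V : I × (−ε,ε)^k → ℝⁿ` with `V(t,0) = c(t)` and every `t ↦ V(t,s)`
a geodesic of `G` on `I`. -/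
def IsGeodesicVariation (n : ℕ) (G : En n × En n → En n) (c : ℝ → En n) (I : Set ℝ)
    (k : ℕ) (ε : ℝ) (V : ℝ × (Fin k → ℝ) → En n) : Prop :=
  ContDiffOn ℝ (⊤ : ℕ∞) V (I ×ˢ cube k ε) ∧ (∀ t ∈ I, V (t, 0) = c t) ∧
    ∀ s ∈ cube k ε, IsGeodesicOn n G (fun t => V (t, s)) I

/-- `∂_{s^a} V (t, 0)`: the variation vector field in direction `a` along the base curve. -/
def dS (n k : ℕ) (V : ℝ × (Fin k → ℝ) → En n) (a : Fin k) (t : ℝ) : En n :=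
  fderiv ℝ (fun s => V (t, s)) 0 (Pi.single a 1)

/-- The span `W_t` of a transversal frame `e₁(t), …, e_m(t)` along `c`. -/
def Wspan (n m : ℕ) (e : Fin m → ℝ → En n) (t : ℝ) : Submodule ℝ (En n) :=
  Submodule.span ℝ (Set.range fun a => e a t)

/-- A family `e₁, …, e_m` of parallel vector fields along `c` on `I` such that
`{c'(t), e₁(t), …, e_m(t)}` is a basis of `ℝⁿ` for every `t ∈ I`. -/
def IsParallelFrame (n m : ℕ) (G : En n × En n → En n) (c : ℝ → En n) (I : Set ℝ)
    (e : Fin m → ℝ → En n) : Prop :=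
  (∀ a, IsParallel n G c I (e a)) ∧
    ∀ t ∈ I,
      LinearIndependent ℝ (fun i : Option (Fin m) => i.elim (deriv c t) fun a => e a t) ∧
      Submodule.span ℝ
        (Set.range fun i : Option (Fin m) => i.elim (deriv c t) fun a => e a t) = ⊤

section Aux

variable {n k : ℕ}

lemma isOpen_cube (k : ℕ) (ε : ℝ) : IsOpen (cube k ε) := by
  have : cube k ε = Set.pi Set.univ (fun _ : Fin k => Metric.ball (0:ℝ) ε) := by
    ext s; simp [cube, Metric.mem_ball, Real.dist_eq]
  rw [this]
  exact isOpen_set_pi Set.finite_univ fun _ _ => Metric.isOpen_ball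

lemma zero_mem_cube {k : ℕ} {ε : ℝ} (hε : 0 < ε) : (0 : Fin k → ℝ) ∈ cube k ε := by
  intro i; simpa using hε

lemma isOpen_sprayDomain (n : ℕ) : IsOpen {p : En n × En n | p.2 ≠ 0} :=
  isOpen_compl_singleton.preimage continuous_snd

lemma DyG_eq (G : En n × En n → En n) {x y : En n} (h : DifferentiableAt ℝ G (x, y)) :
    DyG n G x y = (fderiv ℝ G (x, y)).comp (ContinuousLinearMap.inr ℝ (En n) (En n)) := by
  have : (fun y' => G (x, y')) = G ∘ (fun y' : En n => (x, y')) := rfl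
  rw [DyG, this]
  exact (h.hasFDerivAt.comp y (hasFDerivAt_prodMk_right x y)).fderiv

lemma DxG_eq (G : En n × En n → En n) {x y : En n} (h : DifferentiableAt ℝ G (x, y)) :
    DxG n G x y = (fderiv ℝ G (x, y)).comp (ContinuousLinearMap.inl ℝ (En n) (En n)) := by
  have : (fun x' => G (x', y)) = G ∘ (fun x' : En n => (x', y)) := rfl
  rw [DxG, this]
  exact (h.hasFDerivAt.comp x (hasFDerivAt_prodMk_left x y)).fderiv

lemma fderiv_split (G : En n × En n → En n) {x y : En n} (h : DifferentiableAt ℝ G (x, y))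
    (u v : En n) :
    fderiv ℝ G (x, y) (u, v) = DxG n G x y u + DyG n G x y v := by
  rw [DxG_eq G h, DyG_eq G h]
  simp only [ContinuousLinearMap.comp_apply, ContinuousLinearMap.inl_apply,
    ContinuousLinearMap.inr_apply]
  rw [← map_add]
  norm_num

end Aux
section Aux2

variable {n : ℕ}

lemma spray_contDiffAt {G : En n × En n → En n} (hG : IsSpray n G) {x y : En n} (hy : y ≠ 0) :
    ContDiffAt ℝ (⊤ : ℕ∞) G (x, y) :=
  hG.1.contDiffAt ((isOpen_sprayDomain n).mem_nhds hy)

lemma spray_diffAt {G : En n × En n → En n} (hG : IsSpray n G) {x y : En n} (hy : y ≠ 0) :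
    DifferentiableAt ℝ G (x, y) :=
  (spray_contDiffAt hG hy).differentiableAt (by simp)

/-- Euler's relation: `D_yG(x,y)·y = 2·G(x,y)`. -/
lemma euler {G : En n × En n → En n} (hG : IsSpray n G) {x y : En n} (hy : y ≠ 0) :
    DyG n G x y y = (2 : ℝ) • G (x, y) := by
  have hdiff : DifferentiableAt ℝ G (x, y) := spray_diffAt hG hy
  have hγ : HasDerivAt (fun l : ℝ => (x, l • y)) ((0 : En n), (1:ℝ) • y) 1 :=
    (hasDerivAt_const (x := (1:ℝ)) (c := x)).prodMk ((hasDerivAt_id (1:ℝ)).smul_const y)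
  have h1 : HasDerivAt (fun l : ℝ => G (x, l • y)) (fderiv ℝ G (x, y) (0, y)) 1 := by
    have := hdiff.hasFDerivAt.comp_hasDerivAt_of_eq 1 hγ (by simp)
    simpa [Function.comp_def] using this
  have h2 : HasDerivAt (fun l : ℝ => G (x, l • y)) ((2 : ℝ) • G (x, y)) 1 := by
    have hpow : HasDerivAt (fun l : ℝ => l ^ 2 • G (x, y)) ((2 : ℝ) • G (x, y)) 1 := by
      have := (hasDerivAt_pow 2 (1:ℝ)).smul_const (G (x, y))
      norm_num at this; exact this
    apply hpow.congr_of_eventuallyEq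
    filter_upwards [isOpen_Ioi.mem_nhds (show (0:ℝ) < 1 by norm_num)] with l hl
    exact hG.2 x y hy l hl
  have := h1.unique h2
  rw [← this, fderiv_split G hdiff]
  simp

/-- Along a geodesic, the velocity field is parallel: `c'' = -N·c'`. -/
lemma geodesic_velocity_parallel {G : En n × En n → En n} (hG : IsSpray n G)
    {c : ℝ → En n} {I : Set ℝ} (hc : IsGeodesicOn n G c I) {t : ℝ} (ht : t ∈ I) :
    deriv (deriv c) t = - Nc n G c t (deriv c t) := by
  have h1 := hc.2.2 t ht
  have h2 : Nc n G c t (deriv c t) = (2 : ℝ) • G (c t, deriv c t) :=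
    euler hG (hc.2.1 t ht)
  rw [h2]
  linear_combination (norm := module) h1

end Aux2
section Aux3

variable {n : ℕ} {G : En n × En n → En n} {c : ℝ → En n} {I : Set ℝ}

lemma topadd : ((⊤:ℕ∞) : WithTop ℕ∞) + 1 ≤ ((⊤:ℕ∞) : WithTop ℕ∞) := by
  exact_mod_cast le_top

lemma onele : (1 : WithTop ℕ∞) ≤ ((⊤:ℕ∞) : WithTop ℕ∞) := by exact_mod_cast le_top

lemma twole : (2 : WithTop ℕ∞) ≤ ((⊤:ℕ∞) : WithTop ℕ∞) := by
  have : ((2:ℕ∞) : WithTop ℕ∞) ≤ ((⊤:ℕ∞) : WithTop ℕ∞) := by exact_mod_cast le_top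
  simpa using this

/-- `C^∞`-on-open-set functions are differentiable at points of the set. -/
lemma cdon_diffAt {F : Type*} [NormedAddCommGroup F] [NormedSpace ℝ F]
    {E : Type*} [NormedAddCommGroup E] [NormedSpace ℝ E]
    {f : E → F} {s : Set E} (hf : ContDiffOn ℝ (⊤:ℕ∞) f s) (hs : IsOpen s)
    {x : E} (hx : x ∈ s) : DifferentiableAt ℝ f x :=
  (hf.contDiffAt (hs.mem_nhds hx)).differentiableAt (by simp)

lemma deriv_c_smooth (hIopen : IsOpen I) (hc : IsGeodesicOn n G c I) :
    ContDiffOn ℝ (⊤:ℕ∞) (deriv c) I :=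
  hc.1.deriv_of_isOpen hIopen topadd

lemma curve_pair_smooth (hIopen : IsOpen I) (hc : IsGeodesicOn n G c I) :
    ContDiffOn ℝ (⊤:ℕ∞) (fun t => (c t, deriv c t)) I :=
  hc.1.prodMk (deriv_c_smooth hIopen hc)

lemma curve_pair_mapsTo (hc : IsGeodesicOn n G c I) :
    Set.MapsTo (fun t => (c t, deriv c t)) I {p : En n × En n | p.2 ≠ 0} :=
  fun t ht => hc.2.1 t ht

lemma Nc_eq (hG : IsSpray n G) (hc : IsGeodesicOn n G c I) {t : ℝ} (ht : t ∈ I) :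
    Nc n G c t = (fderiv ℝ G (c t, deriv c t)).comp (ContinuousLinearMap.inr ℝ (En n) (En n)) :=
  DyG_eq G (spray_diffAt hG (hc.2.1 t ht))

lemma Nc_smooth (hG : IsSpray n G) (hIopen : IsOpen I) (hc : IsGeodesicOn n G c I) :
    ContDiffOn ℝ (⊤:ℕ∞) (fun t => Nc n G c t) I := by
  have h1 : ContDiffOn ℝ (⊤:ℕ∞) (fderiv ℝ G) {p : En n × En n | p.2 ≠ 0} :=
    hG.1.fderiv_of_isOpen (isOpen_sprayDomain n) topadd
  have h2 : ContDiffOn ℝ (⊤:ℕ∞)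
      (fun t => (fderiv ℝ G (c t, deriv c t)).comp
        (ContinuousLinearMap.inr ℝ (En n) (En n))) I :=
    (h1.comp (curve_pair_smooth hIopen hc) (curve_pair_mapsTo hc)).clm_comp contDiffOn_const
  exact h2.congr fun t ht => Nc_eq hG hc ht

lemma Nc_diffAt (hG : IsSpray n G) (hIopen : IsOpen I) (hc : IsGeodesicOn n G c I)
    {t : ℝ} (ht : t ∈ I) : DifferentiableAt ℝ (fun t' => Nc n G c t') t :=
  cdon_diffAt (Nc_smooth hG hIopen hc) hIopen ht

end Aux3
section Aux4

variable {E F X : Type*} [NormedAddCommGroup E] [NormedSpace ℝ E]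
  [NormedAddCommGroup F] [NormedSpace ℝ F] [NormedAddCommGroup X] [NormedSpace ℝ X]

/-- Evaluation commutes with `fderiv` for CLM-valued maps. -/
lemma fderiv_eval {D : E → F →L[ℝ] X} {p : E} (hD : DifferentiableAt ℝ D p) (u : F) (v : E) :
    fderiv ℝ (fun q => D q u) p v = fderiv ℝ D p v u := by
  rw [fderiv_clm_apply hD (differentiableAt_const u)]
  simp

/-- Symmetry of second derivatives in directional form. -/
lemma fderiv_swap {f : E → X} {p : E} (hf : ContDiffAt ℝ (⊤:ℕ∞) f p) (u v : E) :
    fderiv ℝ (fun q => fderiv ℝ f q u) p v = fderiv ℝ (fun q => fderiv ℝ f q v) p u := by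
  have hD : DifferentiableAt ℝ (fderiv ℝ f) p :=
    (hf.fderiv_right topadd).differentiableAt (by simp)
  rw [fderiv_eval hD, fderiv_eval hD]
  exact (hf.isSymmSndFDerivAt (by rw [minSmoothness_of_isRCLikeNormedField]; exact twole)).eq v u

variable {k : ℕ}

/-- The `t`-partial derivative of a map on `ℝ × ℝᵏ` as a `deriv` of a slice. -/
lemma hasDerivAt_slice {g : ℝ × (Fin k → ℝ) → X} {t : ℝ} {s : Fin k → ℝ}
    (h : DifferentiableAt ℝ g (t, s)) :
    HasDerivAt (fun t' => g (t', s)) (fderiv ℝ g (t, s) (1, 0)) t := by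
  have hγ : HasDerivAt (fun t' : ℝ => (t', s)) ((1:ℝ), (0 : Fin k → ℝ)) t :=
    (hasDerivAt_id t).prodMk (hasDerivAt_const t s)
  exact h.hasFDerivAt.comp_hasDerivAt t hγ

/-- The `s`-partial derivative of a map on `ℝ × ℝᵏ` as an `fderiv` of a slice. -/
lemma fderiv_slice_s {g : ℝ × (Fin k → ℝ) → X} {t : ℝ} {s : Fin k → ℝ}
    (h : DifferentiableAt ℝ g (t, s)) :
    fderiv ℝ (fun s' => g (t, s')) s =
      (fderiv ℝ g (t, s)).comp (ContinuousLinearMap.inr ℝ ℝ (Fin k → ℝ)) :=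
  (h.hasFDerivAt.comp s (hasFDerivAt_prodMk_right t s)).fderiv

end Aux4
section Aux5

/-- The variation vector fields of a geodesic variation are Jacobi fields. -/
lemma variation_jacobi {n k : ℕ} {G : En n × En n → En n} {c : ℝ → En n} {I : Set ℝ}
    {ε : ℝ} {V : ℝ × (Fin k → ℝ) → En n}
    (hG : IsSpray n G) (hIopen : IsOpen I) (hc : IsGeodesicOn n G c I)
    (hε : 0 < ε) (hV : IsGeodesicVariation n G c I k ε V) (a : Fin k) :
    IsJacobiField n G c I (dS n k V a) := by
  set U : Set (ℝ × (Fin k → ℝ)) := I ×ˢ cube k ε with hU_def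
  have hU : IsOpen U := hIopen.prod (isOpen_cube k ε)
  have hVs : ContDiffOn ℝ (⊤:ℕ∞) V U := hV.1
  have hmem : ∀ {t : ℝ}, t ∈ I → (t, (0 : Fin k → ℝ)) ∈ U :=
    fun ht => ⟨ht, zero_mem_cube hε⟩
  set F₁ : ℝ × (Fin k → ℝ) → En n := fun p => fderiv ℝ V p (1, 0) with hF₁def
  have hDV : ContDiffOn ℝ (⊤:ℕ∞) (fderiv ℝ V) U := hVs.fderiv_of_isOpen hU topadd
  have hF₁s : ContDiffOn ℝ (⊤:ℕ∞) F₁ U := hDV.clm_apply contDiffOn_const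
  set F₂ : ℝ × (Fin k → ℝ) → En n := fun p => fderiv ℝ F₁ p (1, 0) with hF₂def
  have hDF₁ : ContDiffOn ℝ (⊤:ℕ∞) (fderiv ℝ F₁) U := hF₁s.fderiv_of_isOpen hU topadd
  have hF₂s : ContDiffOn ℝ (⊤:ℕ∞) F₂ U := hDF₁.clm_apply contDiffOn_const
  have hslice : ∀ {t : ℝ} {s : Fin k → ℝ}, (t, s) ∈ U →
      HasDerivAt (fun t' => V (t', s)) (F₁ (t, s)) t :=
    fun hp => hasDerivAt_slice (cdon_diffAt hVs hU hp)
  have hslice' : ∀ {t : ℝ} {s : Fin k → ℝ}, (t, s) ∈ U →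
      deriv (fun t' => V (t', s)) t = F₁ (t, s) := fun hp => (hslice hp).deriv
  have hF₁ne : ∀ {t : ℝ} {s : Fin k → ℝ}, (t, s) ∈ U → F₁ (t, s) ≠ 0 := by
    intro t s hp
    rw [← hslice' hp]
    exact (hV.2.2 s hp.2).2.1 t hp.1
  have hgeo : ∀ p ∈ U, F₂ p + (2:ℝ) • G (V p, F₁ p) = 0 := by
    rintro ⟨t, s⟩ hp
    have h0 := (hV.2.2 s hp.2).2.2 t hp.1
    have he1 : (deriv fun t' => V (t', s)) =ᶠ[nhds t] fun t' => F₁ (t', s) := by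
      filter_upwards [hIopen.mem_nhds hp.1] with t' ht'
      exact hslice' ⟨ht', hp.2⟩
    have h2 : deriv (deriv fun t' => V (t', s)) t = F₂ (t, s) := by
      rw [Filter.EventuallyEq.deriv_eq he1]
      exact (hasDerivAt_slice (cdon_diffAt hF₁s hU hp)).deriv
    simp only at h0
    rw [h2, hslice' hp] at h0
    exact h0
  set w : ℝ × (Fin k → ℝ) := ((0:ℝ), Pi.single a 1) with hwdef
  set j : ℝ → En n := dS n k V a with hjdef
  have hjeq : ∀ {t : ℝ}, t ∈ I → j t = fderiv ℝ V (t, 0) w := by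
    intro t ht
    show dS n k V a t = _
    simp only [dS]
    rw [fderiv_slice_s (cdon_diffAt hVs hU (hmem ht))]
    rfl
  have hderivj : ∀ {t : ℝ}, t ∈ I → HasDerivAt j (fderiv ℝ F₁ (t, 0) w) t := by
    intro t ht
    have h1 : HasDerivAt (fun t' => fderiv ℝ V (t', 0) w)
        (fderiv ℝ (fun p => fderiv ℝ V p w) (t, 0) (1, 0)) t :=
      hasDerivAt_slice ((cdon_diffAt hDV hU (hmem ht)).clm_apply (differentiableAt_const w))
    have h2 : fderiv ℝ (fun p => fderiv ℝ V p w) (t, 0) (1, 0) = fderiv ℝ F₁ (t, 0) w :=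
      fderiv_swap (hVs.contDiffAt (hU.mem_nhds (hmem ht))) w (1, 0)
    rw [h2] at h1
    apply h1.congr_of_eventuallyEq
    filter_upwards [hIopen.mem_nhds ht] with t' ht'
    exact hjeq ht'
  have hderivj' : ∀ {t : ℝ}, t ∈ I → deriv j t = fderiv ℝ F₁ (t, 0) w :=
    fun ht => (hderivj ht).deriv
  have hderiv2j : ∀ {t : ℝ}, t ∈ I → deriv (deriv j) t = fderiv ℝ F₂ (t, 0) w := by
    intro t ht
    have h1 : HasDerivAt (fun t' => fderiv ℝ F₁ (t', 0) w)
        (fderiv ℝ (fun p => fderiv ℝ F₁ p w) (t, 0) (1, 0)) t :=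
      hasDerivAt_slice ((cdon_diffAt hDF₁ hU (hmem ht)).clm_apply (differentiableAt_const w))
    have h2 : fderiv ℝ (fun p => fderiv ℝ F₁ p w) (t, 0) (1, 0) = fderiv ℝ F₂ (t, 0) w :=
      fderiv_swap (hF₁s.contDiffAt (hU.mem_nhds (hmem ht))) w (1, 0)
    rw [h2] at h1
    have h3 : deriv j =ᶠ[nhds t] fun t' => fderiv ℝ F₁ (t', 0) w := by
      filter_upwards [hIopen.mem_nhds ht] with t' ht'
      exact hderivj' ht'
    rw [Filter.EventuallyEq.deriv_eq h3]
    exact h1.deriv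
  have hjs : ContDiffOn ℝ (⊤:ℕ∞) j I := by
    have hcurve : ContDiffOn ℝ (⊤:ℕ∞) (fun t : ℝ => (t, (0 : Fin k → ℝ))) I :=
      (contDiff_id.prodMk contDiff_const).contDiffOn
    have hsm : ContDiffOn ℝ (⊤:ℕ∞) (fun t => fderiv ℝ V (t, 0) w) I :=
      (hDV.comp hcurve fun t ht => hmem ht).clm_apply contDiffOn_const
    exact hsm.congr fun t ht => hjeq ht
  refine ⟨hjs, fun t ht => ?_⟩
  -- identify base data at (t, 0)
  have hVc : V (t, 0) = c t := hV.2.1 t ht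
  have hF₁c : F₁ (t, 0) = deriv c t := by
    rw [← hslice' (hmem ht)]
    apply Filter.EventuallyEq.deriv_eq
    filter_upwards [hIopen.mem_nhds ht] with t' ht'
    exact hV.2.1 t' ht'
  -- differentiate the geodesic equation in the direction w
  have hH0 : (fun p => F₂ p + (2:ℝ) • G (V p, F₁ p)) =ᶠ[nhds (t, 0)]
      (fun _ => (0 : En n)) := by
    filter_upwards [hU.mem_nhds (hmem ht)] with p hp
    exact hgeo p hp
  have hdH : fderiv ℝ (fun p => F₂ p + (2:ℝ) • G (V p, F₁ p)) (t, 0) = 0 := by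
    rw [Filter.EventuallyEq.fderiv_eq hH0, fderiv_fun_const]
    rfl
  have hdF₂ : DifferentiableAt ℝ F₂ (t, 0) := cdon_diffAt hF₂s hU (hmem ht)
  have hdVat : DifferentiableAt ℝ V (t, 0) := cdon_diffAt hVs hU (hmem ht)
  have hdF₁at : DifferentiableAt ℝ F₁ (t, 0) := cdon_diffAt hF₁s hU (hmem ht)
  have hGd : DifferentiableAt ℝ G (V (t, 0), F₁ (t, 0)) := spray_diffAt hG (hF₁ne (hmem ht))
  have hGVF : HasFDerivAt (fun p => G (V p, F₁ p))
      ((fderiv ℝ G (V (t, 0), F₁ (t, 0))).comp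
        ((fderiv ℝ V (t, 0)).prod (fderiv ℝ F₁ (t, 0)))) (t, 0) := by
    have hpair : HasFDerivAt (fun p : ℝ × (Fin k → ℝ) => (V p, F₁ p))
        ((fderiv ℝ V (t, 0)).prod (fderiv ℝ F₁ (t, 0))) (t, 0) :=
      hdVat.hasFDerivAt.prodMk hdF₁at.hasFDerivAt
    exact HasFDerivAt.comp (f := fun p : ℝ × (Fin k → ℝ) => (V p, F₁ p)) (g := G)
      ((t, 0) : ℝ × (Fin k → ℝ)) hGd.hasFDerivAt hpair
  have hexp : fderiv ℝ (fun p => F₂ p + (2:ℝ) • G (V p, F₁ p)) (t, 0) w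
      = fderiv ℝ F₂ (t, 0) w + (2:ℝ) • fderiv ℝ G (V (t, 0), F₁ (t, 0))
          (fderiv ℝ V (t, 0) w, fderiv ℝ F₁ (t, 0) w) := by
    rw [fderiv_fun_add (g := fun p => (2:ℝ) • G (V p, F₁ p)) hdF₂
        (hGVF.differentiableAt.const_smul (2:ℝ)),
      fderiv_fun_const_smul hGVF.differentiableAt, hGVF.fderiv]
    simp
  have hkey : fderiv ℝ F₂ (t, 0) w + (2:ℝ) • fderiv ℝ G (V (t, 0), F₁ (t, 0))
      (fderiv ℝ V (t, 0) w, fderiv ℝ F₁ (t, 0) w) = 0 := by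
    rw [← hexp, hdH]
    rfl
  rw [fderiv_split G hGd] at hkey
  rw [hderiv2j ht, hderivj' ht, hjeq ht, ← hVc, ← hF₁c]
  linear_combination (norm := module) hkey

end Aux5
section Aux6

variable {n m : ℕ} {G : En n × En n → En n} {c : ℝ → En n} {I : Set ℝ}

/-- A column operator `v ↦ (v i) • x`, packaged smoothly. -/
def colCLM (i : Fin n) (x : En n) : En n →L[ℝ] En n :=
  (ContinuousLinearMap.proj i).smulRight x

lemma colCLM_apply (i : Fin n) (x : En n) (v : En n) : colCLM i x v = v i • x := rfl

lemma colCLM_smooth {f : ℝ → En n} (hf : ContDiffOn ℝ (⊤:ℕ∞) f I) (i : Fin n) :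
    ContDiffOn ℝ (⊤:ℕ∞) (fun t => colCLM i (f t)) I :=
  (ContinuousLinearMap.smulRightL ℝ (En n) (En n)
    (ContinuousLinearMap.proj i)).contDiff.comp_contDiffOn hf

/-- The frame operator: sends the standard basis to a given family of vectors. -/
def frameCLM (κ : Fin n ≃ Option (Fin m)) (f : Option (Fin m) → En n) : En n →L[ℝ] En n :=
  ∑ i : Fin n, colCLM i (f (κ i))

lemma frameCLM_single (κ : Fin n ≃ Option (Fin m)) (f : Option (Fin m) → En n) (i₀ : Fin n) :
    frameCLM κ f (Pi.single i₀ 1) = f (κ i₀) := by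
  simp only [frameCLM, ContinuousLinearMap.sum_apply, colCLM_apply]
  rw [Finset.sum_eq_single i₀]
  · simp
  · intro j _ hj
    simp [Pi.single_apply, hj]
  · simp

/-- Smoothness of `J` determined by its values on a moving frame. -/
lemma J_smooth_of_frame (hmn : m + 1 = n)
    (hG : IsSpray n G) (hIopen : IsOpen I) (hc : IsGeodesicOn n G c I)
    {e : Fin m → ℝ → En n} (he : IsParallelFrame n m G c I e)
    (q : Fin m → ℝ → En n) (hq : ∀ a, ContDiffOn ℝ (⊤:ℕ∞) (q a) I)
    (J : ℝ → En n →L[ℝ] En n)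
    (hJc' : ∀ t ∈ I, J t (deriv c t) = 0)
    (hJe' : ∀ t ∈ I, ∀ a, J t (e a t) = q a t) :
    ContDiffOn ℝ (⊤:ℕ∞) J I := by
  classical
  set κ : Fin n ≃ Option (Fin m) := (finCongr hmn.symm).trans (finSuccEquiv m) with hκ
  set fr : ℝ → Option (Fin m) → En n :=
    fun t i => i.elim (deriv c t) (fun a => e a t) with hfr
  set qf : ℝ → Option (Fin m) → En n := fun t i => i.elim 0 (fun a => q a t) with hqf
  set P : ℝ → En n →L[ℝ] En n := fun t => frameCLM κ (fr t) with hP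
  set Q : ℝ → En n →L[ℝ] En n := fun t => frameCLM κ (qf t) with hQ
  have hPs : ContDiffOn ℝ (⊤:ℕ∞) P I := by
    apply ContDiffOn.sum
    intro i _
    rcases h : κ i with _ | a
    · exact (colCLM_smooth (deriv_c_smooth hIopen hc) i).congr (by intro t ht; simp [hfr, h])
    · exact (colCLM_smooth (he.1 a).1 i).congr (by intro t ht; simp [hfr, h])
  have hQs : ContDiffOn ℝ (⊤:ℕ∞) Q I := by
    apply ContDiffOn.sum
    intro i _
    rcases h : κ i with _ | a
    · exact (colCLM_smooth (contDiffOn_const (c := (0 : En n))) i).congr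
        (by intro t ht; simp [hqf, h])
    · exact (colCLM_smooth (hq a) i).congr (by intro t ht; simp [hqf, h])
  -- `P t` is invertible for `t ∈ I`
  have hunit : ∀ t ∈ I, IsUnit (P t) := by
    intro t ht
    obtain ⟨hli, hsp⟩ := he.2 t ht
    let B : Module.Basis (Option (Fin m)) ℝ (En n) := Module.Basis.mk hli (by rw [hsp])
    let Pe : En n ≃ₗ[ℝ] En n := (Pi.basisFun ℝ (Fin n)).equiv B κ
    have hPeq : (P t : En n →L[ℝ] En n) = (Pe.toContinuousLinearEquiv : En n →L[ℝ] En n) := by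
      apply ContinuousLinearMap.coe_injective
      apply (Pi.basisFun ℝ (Fin n)).ext
      intro i
      have h1 : (Pi.basisFun ℝ (Fin n)) i = Pi.single i 1 := by
        simp [Pi.basisFun_apply]
      simp only [ContinuousLinearMap.coe_coe, h1]
      rw [show (P t) (Pi.single i 1) = fr t (κ i) from frameCLM_single κ (fr t) i]
      show _ = Pe (Pi.single i 1)
      rw [← h1, Module.Basis.equiv_apply, Module.Basis.mk_apply]
    exact ⟨⟨P t, (Pe.toContinuousLinearEquiv.symm : En n →L[ℝ] En n),
      by ext v; simp [ContinuousLinearMap.mul_apply, hPeq],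
      by ext v; simp [ContinuousLinearMap.mul_apply, hPeq]⟩, rfl⟩
  -- `J = Q * P⁻¹` on `I`
  have hJform : ∀ t ∈ I, J t = Q t * Ring.inverse (P t) := by
    intro t ht
    have hJP : J t * P t = Q t := by
      apply ContinuousLinearMap.coe_injective
      apply (Pi.basisFun ℝ (Fin n)).ext
      intro i
      have h1 : (Pi.basisFun ℝ (Fin n)) i = Pi.single i 1 := by
        simp [Pi.basisFun_apply]
      simp only [ContinuousLinearMap.coe_coe, h1, ContinuousLinearMap.mul_apply]
      rw [show (P t) (Pi.single i 1) = fr t (κ i) from frameCLM_single κ (fr t) i,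
        show (Q t) (Pi.single i 1) = qf t (κ i) from frameCLM_single κ (qf t) i]
      rcases κ i with _ | a
      · simpa [hfr, hqf] using hJc' t ht
      · simpa [hfr, hqf] using hJe' t ht a
    calc J t = J t * (P t * Ring.inverse (P t)) := by
          rw [Ring.mul_inverse_cancel _ (hunit t ht), mul_one]
      _ = (J t * P t) * Ring.inverse (P t) := (mul_assoc _ _ _).symm
      _ = Q t * Ring.inverse (P t) := by rw [hJP]
  have hInv : ContDiffOn ℝ (⊤:ℕ∞) (fun t => Ring.inverse (P t)) I := by
    intro t ht
    have h1 : ContDiffAt ℝ (⊤:ℕ∞) Ring.inverse (P t) := by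
      have h2 : ContDiffAt ℝ (⊤:ℕ∞) Ring.inverse
          (((hunit t ht).unit : Units (En n →L[ℝ] En n)) : En n →L[ℝ] En n) :=
        contDiffAt_ringInverse (𝕜 := ℝ) _
      rwa [(hunit t ht).unit_spec] at h2
    exact (h1.comp t (hPs.contDiffAt (hIopen.mem_nhds ht))).contDiffWithinAt
  exact (hQs.mul hInv).congr hJform

end Aux6
section Aux7

variable {n : ℕ} {G : En n × En n → En n} {c : ℝ → En n} {I : Set ℝ}

/-- Applying `∇` of an endomorphism field to a parallel vector field gives `∇` of the image. -/
lemma covE_parallel_apply (F : ℝ → En n →L[ℝ] En n) (v : ℝ → En n) {t : ℝ}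
    (hF : DifferentiableAt ℝ F t) (hv : DifferentiableAt ℝ v t)
    (hpar : deriv v t = - Nc n G c t (v t)) :
    covE n G c F t (v t) = covV n G c (fun t' => F t' (v t')) t := by
  unfold covE covV
  rw [deriv_clm_apply hF hv, hpar]
  simp only [ContinuousLinearMap.add_apply, ContinuousLinearMap.sub_apply,
    ContinuousLinearMap.comp_apply, map_neg]
  abel

lemma covV_congr_of_eventuallyEq {f g : ℝ → En n} {t : ℝ} (h : f =ᶠ[nhds t] g) :
    covV n G c f t = covV n G c g t := by
  unfold covV
  rw [h.deriv_eq, h.eq_of_nhds]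

lemma covV_eq_zero (hIopen : IsOpen I) {u : ℝ → En n} (hu : ∀ t' ∈ I, u t' = 0)
    {t : ℝ} (ht : t ∈ I) : covV n G c u t = 0 := by
  unfold covV
  have h1 : u =ᶠ[nhds t] fun _ => (0 : En n) := by
    filter_upwards [hIopen.mem_nhds ht] with r hr; exact hu r hr
  rw [h1.deriv_eq, deriv_const, hu t ht]
  simp

end Aux7
/-- The endomorphism field determined by `J·c' = 0` and `J·e_a = ∂_{s^a}V(·,0)` for an
`(n−1)`-parameter geodesic variation `V` is a (in particular `C^∞`) Jacobi tensor. -/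
theorem variation_defines_jacobi_tensor (n : ℕ) (hn : 2 ≤ n)
    (G : En n × En n → En n) (hG : IsSpray n G)
    (I : Set ℝ) (hIopen : IsOpen I) (hIconn : I.OrdConnected)
    (c : ℝ → En n) (hc : IsGeodesicOn n G c I)
    (ε : ℝ) (hε : 0 < ε) (V : ℝ × (Fin (n - 1) → ℝ) → En n)
    (hV : IsGeodesicVariation n G c I (n - 1) ε V)
    (e : Fin (n - 1) → ℝ → En n) (he : IsParallelFrame n (n - 1) G c I e)
    (J : ℝ → En n →L[ℝ] En n)
    (hJc : ∀ t ∈ I, J t (deriv c t) = 0)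
    (hJe : ∀ t ∈ I, ∀ a, J t (e a t) = dS n (n - 1) V a t) :
    IsJacobiTensor n G c I J := by
  have hjac : ∀ a, IsJacobiField n G c I (dS n (n - 1) V a) :=
    fun a => variation_jacobi hG hIopen hc hε hV a
  have hJs : ContDiffOn ℝ (⊤:ℕ∞) J I :=
    J_smooth_of_frame (by omega) hG hIopen hc he (fun a => dS n (n - 1) V a)
      (fun a => (hjac a).1) J hJc hJe
  refine ⟨hJs, fun t ht => ?_⟩
  have hJd : ∀ {t' : ℝ}, t' ∈ I → DifferentiableAt ℝ J t' :=
    fun ht' => cdon_diffAt hJs hIopen ht'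
  have hNs : ContDiffOn ℝ (⊤:ℕ∞) (fun t' => Nc n G c t') I := Nc_smooth hG hIopen hc
  have hJ1s : ContDiffOn ℝ (⊤:ℕ∞) (fun t' => covE n G c J t') I := by
    have h1 : ContDiffOn ℝ (⊤:ℕ∞)
        (fun t' => deriv J t' + (Nc n G c t').comp (J t') - (J t').comp (Nc n G c t')) I :=
      ((hJs.deriv_of_isOpen hIopen topadd).add (hNs.clm_comp hJs)).sub (hJs.clm_comp hNs)
    exact h1
  have hJ1d : DifferentiableAt ℝ (fun t' => covE n G c J t') t :=
    cdon_diffAt hJ1s hIopen ht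
  have hcpar : ∀ t' ∈ I, deriv (deriv c) t' = - Nc n G c t' (deriv c t') :=
    fun t' ht' => geodesic_velocity_parallel hG hc ht'
  have hepar : ∀ (a) (t' : ℝ), t' ∈ I → deriv (e a) t' = - Nc n G c t' (e a t') :=
    fun a t' ht' => eq_neg_of_add_eq_zero_left ((he.1 a).2 t' ht')
  -- the key reduction to vector fields, for parallel `v`
  have key : ∀ (v : ℝ → En n), (∀ t' ∈ I, DifferentiableAt ℝ v t') →
      (∀ t' ∈ I, deriv v t' = - Nc n G c t' (v t')) →
      covE n G c (fun t' => covE n G c J t') t (v t) =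
        covV n G c (fun t' => covV n G c (fun r => J r (v r)) t') t := by
    intro v hvd hvp
    rw [covE_parallel_apply (fun t' => covE n G c J t') v hJ1d (hvd t ht) (hvp t ht)]
    apply covV_congr_of_eventuallyEq
    filter_upwards [hIopen.mem_nhds ht] with r hr
    exact covE_parallel_apply J v (hJd hr) (hvd r hr) (hvp r hr)
  -- case 1 : the velocity field
  have case1 : covE n G c (fun t' => covE n G c J t') t (deriv c t) = 0 := by
    rw [key (deriv c) (fun t' ht' => cdon_diffAt (deriv_c_smooth hIopen hc) hIopen ht') hcpar]
    exact covV_eq_zero hIopen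
      (fun t' ht' => covV_eq_zero hIopen (fun r hr => hJc r hr) ht') ht
  -- case 2 : the transversal frame fields
  have case2 : ∀ a, covE n G c (fun t' => covE n G c J t') t (e a t)
      + (Phi n G c t) (J t (e a t)) = 0 := by
    intro a
    set j : ℝ → En n := dS n (n - 1) V a with hjdef
    have hjd : ∀ t' ∈ I, DifferentiableAt ℝ j t' := fun t' ht' =>
      cdon_diffAt (hjac a).1 hIopen ht'
    have hj's : ContDiffOn ℝ (⊤:ℕ∞) (deriv j) I := (hjac a).1.deriv_of_isOpen hIopen topadd
    rw [key (e a) (fun t' ht' => cdon_diffAt (he.1 a).1 hIopen ht') (hepar a)]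
    have hcu : ∀ t' ∈ I, covV n G c (fun r => J r (e a r)) t'
        = deriv j t' + Nc n G c t' (j t') := by
      intro t' ht'
      unfold covV
      have h1 : (fun r => J r (e a r)) =ᶠ[nhds t'] j := by
        filter_upwards [hIopen.mem_nhds ht'] with r hr; exact hJe r hr a
      rw [h1.deriv_eq, show (fun r => (J r) (e a r)) t' = j t' from hJe t' ht' a]
    have hstep : covV n G c (fun t' => covV n G c (fun r => J r (e a r)) t') t
        = covV n G c (fun t' => deriv j t' + Nc n G c t' (j t')) t := by
      apply covV_congr_of_eventuallyEq
      filter_upwards [hIopen.mem_nhds ht] with r hr; exact hcu r hr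
    rw [hstep]
    have hg : covV n G c (fun t' => deriv j t' + Nc n G c t' (j t')) t
        = (deriv (deriv j) t + ((deriv (fun r => Nc n G c r) t) (j t)
            + Nc n G c t (deriv j t)))
          + Nc n G c t (deriv j t + Nc n G c t (j t)) := by
      unfold covV
      rw [deriv_fun_add (cdon_diffAt hj's hIopen ht)
        ((Nc_diffAt hG hIopen hc ht).clm_apply (hjd t ht)),
        deriv_clm_apply (Nc_diffAt hG hIopen hc ht) (hjd t ht)]
    rw [hg, hJe t ht a, ← hjdef]
    have hPhi : (Phi n G c t) (j t) = (2:ℝ) • DxG n G (c t) (deriv c t) (j t)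
        - (deriv (fun t' => Nc n G c t') t) (j t) - Nc n G c t (Nc n G c t (j t)) := by
      simp [Phi, ContinuousLinearMap.sub_apply, ContinuousLinearMap.smul_apply,
        ContinuousLinearMap.comp_apply]
    rw [hPhi, map_add]
    have hJeq := (hjac a).2 t ht
    rw [← hjdef] at hJeq
    simp only [Nc]
    linear_combination (norm := module) hJeq
  -- conclude by linearity
  apply ContinuousLinearMap.ext
  intro x
  rw [ContinuousLinearMap.zero_apply]
  obtain ⟨hli, hsp⟩ := he.2 t ht
  have hx : x ∈ Submodule.span ℝ
      (Set.range fun i : Option (Fin (n - 1)) => i.elim (deriv c t) fun a => e a t) := by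
    rw [hsp]; exact Submodule.mem_top
  induction hx using Submodule.span_induction with
  | mem y hy =>
    obtain ⟨i, rfl⟩ := hy
    rw [ContinuousLinearMap.add_apply, ContinuousLinearMap.comp_apply]
    cases i with
    | none =>
      simp only [Option.elim]
      rw [hJc t ht, map_zero, case1, add_zero]
    | some a =>
      simpa only [Option.elim] using case2 a
  | zero => simp
  | add y z _ _ hy hz => rw [map_add, hy, hz, add_zero]
  | smul r y _ hy => rw [map_smul, hy, smul_zero]
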